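/- Let R be a semihereditary ring. Then the class 𝒫₁(R) of right R-modules of projective dimension at most 1 is closed under direct limits if and only if R is right hereditary (equivalently, 𝒫₁(R) = Mod-R). -/
import Mathlib


universe u

open MulOpposite Function

/-- An `A`-module `M` has projective dimension at most 1, i.e. there is a short exact
sequence `0 → ker g → P → M → 0` with `P` and `ker g` projective. -/
def ProjDimLE1 (A : Type u) [Ring A] (M : Type u) [AddCommGroup M] [Module A M] : Prop :=
  ∃ (P : ModuleCat.{u} A) (g : P →ₗ[A] M), Module.Projective A P ∧
    Function.Surjective g ∧ Module.Projective A (LinearMap.ker g)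

/-- The class `𝒫₁(A)` of modules of projective dimension at most one. -/
def P1Class (A : Type u) [Ring A] : Set (ModuleCat.{u} A) := {M | ProjDimLE1 A M}

/-- `M` is a direct limit (directed colimit) of a direct system of modules from the
class `C`. -/
def IsDirectLimitOf (A : Type u) [Ring A] (C : Set (ModuleCat.{u} A)) (M : Type u)
    [AddCommGroup M] [Module A M] : Prop :=
  ∃ (ι : Type u) (le : ι → ι → Prop) (htrans : ∀ i j k, le i j → le j k → le i k),
    Nonempty ι ∧
    (∀ i, le i i) ∧
    (∀ i j, ∃ k, le i k ∧ le j k) ∧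
    ∃ (G : ι → ModuleCat.{u} A) (f : ∀ i j, le i j → ((G i : Type u) →ₗ[A] (G j : Type u)))
      (g : ∀ i, (G i : Type u) →ₗ[A] M),
      (∀ i, G i ∈ C) ∧
      (∀ i (h : le i i), f i i h = LinearMap.id) ∧
      (∀ i j k (hij : le i j) (hjk : le j k),
        (f j k hjk).comp (f i j hij) = f i k (htrans i j k hij hjk)) ∧
      (∀ i j (hij : le i j), (g j).comp (f i j hij) = g i) ∧
      (∀ m : M, ∃ i x, g i x = m) ∧
      (∀ i x, g i x = 0 → ∃ j hij, f i j hij x = 0)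

lemma ker_projective_of_pd1 {A : Type u} [Ring A] {N M : Type u} [AddCommGroup N] [Module A N]
    [AddCommGroup M] [Module A M] [hN : Module.Projective A N] (q : N →ₗ[A] M)
    (hq : Function.Surjective q) (hM : ProjDimLE1 A M) :
    Module.Projective A (LinearMap.ker q) := by
  obtain ⟨P, g, hP, hg, hker⟩ := hM
  -- the pullback
  set X : Submodule A (P × N) :=
    LinearMap.ker (g.comp (LinearMap.fst A P N) - q.comp (LinearMap.snd A P N)) with hX
  have memX : ∀ z : P × N, z ∈ X ↔ g z.1 = q z.2 := by
    intro z
    simp [hX, LinearMap.mem_ker, sub_eq_zero]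
  set π₁ : X →ₗ[A] P := (LinearMap.fst A P N).comp X.subtype with hπ₁
  set π₂ : X →ₗ[A] N := (LinearMap.snd A P N).comp X.subtype with hπ₂
  have hπ₁s : Function.Surjective π₁ := by
    intro p
    obtain ⟨n, hn⟩ := hq (g p)
    exact ⟨⟨(p, n), (memX _).2 hn.symm⟩, rfl⟩
  have hπ₂s : Function.Surjective π₂ := by
    intro n
    obtain ⟨p, hp⟩ := hg (q n)
    exact ⟨⟨(p, n), (memX _).2 hp⟩, rfl⟩
  -- X is projective: split it as (ker g) × N
  obtain ⟨σ, hσ⟩ := Module.projective_lifting_property π₂ LinearMap.id hπ₂s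
  have hσ' : ∀ n : N, ((σ n : P × N).2) = n := fun n => DFunLike.congr_fun hσ n
  have hXproj : Module.Projective A X := by
    haveI := hker
    haveI := hN
    -- i : X → ker g × N
    set i₀ : X →ₗ[A] P × N := X.subtype - X.subtype.comp (σ.comp π₂) with hi₀
    have hi₀mem : ∀ x : X, (LinearMap.fst A P N).comp i₀ x ∈ LinearMap.ker g := by
      intro x
      have hx : g (x : P × N).1 = q (x : P × N).2 := (memX _).1 x.2
      have hsx : g (σ (π₂ x) : P × N).1 = q (σ (π₂ x) : P × N).2 := (memX _).1 (σ (π₂ x)).2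
      simp only [LinearMap.mem_ker, LinearMap.comp_apply, hi₀, LinearMap.sub_apply,
        LinearMap.fst_apply, Submodule.coe_subtype, Prod.fst_sub, map_sub]
      rw [hx, hsx, hσ' (π₂ x)]
      simp [hπ₂]
    set i : X →ₗ[A] (LinearMap.ker g × N) :=
      LinearMap.prod (LinearMap.codRestrict (LinearMap.ker g)
        ((LinearMap.fst A P N).comp i₀) hi₀mem) π₂ with hi
    set s₀ : (LinearMap.ker g × N) →ₗ[A] P × N :=
      (LinearMap.inl A P N).comp ((LinearMap.ker g).subtype.comp
        (LinearMap.fst A (LinearMap.ker g) N)) +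
      X.subtype.comp (σ.comp (LinearMap.snd A (LinearMap.ker g) N)) with hs₀
    have hs₀mem : ∀ z, s₀ z ∈ X := by
      rintro ⟨k, n⟩
      have hsx : g (σ n : P × N).1 = q (σ n : P × N).2 := (memX _).1 (σ n).2
      rw [memX]
      simp only [hs₀, LinearMap.add_apply, LinearMap.comp_apply, LinearMap.inl_apply,
        LinearMap.fst_apply, LinearMap.snd_apply, Submodule.coe_subtype,
        Prod.fst_add, Prod.snd_add, map_add]
      have hk : g (k : P) = 0 := k.2
      simp [hk, hsx]
    set s : (LinearMap.ker g × N) →ₗ[A] X := LinearMap.codRestrict X s₀ hs₀mem with hs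
    refine Module.Projective.of_split i s ?_
    refine LinearMap.ext fun x => ?_
    apply Subtype.ext
    show (s₀ (i x) : P × N) = (x : P × N)
    have h2 : (σ (π₂ x) : P × N).2 = π₂ x := hσ' (π₂ x)
    simp only [hs₀, hi, LinearMap.add_apply, LinearMap.comp_apply, LinearMap.prod_apply,
      Pi.prod, LinearMap.fst_apply, LinearMap.snd_apply, LinearMap.inl_apply,
      Submodule.coe_subtype, LinearMap.codRestrict_apply, hi₀, LinearMap.sub_apply,
      Prod.fst_sub]
    apply Prod.ext
    · simp
    · simpa [hπ₂] using h2
  -- now split ker q off X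
  obtain ⟨τ, hτ⟩ := Module.projective_lifting_property π₁ LinearMap.id hπ₁s
  have hτ' : ∀ p : P, ((τ p : P × N).1) = p := fun p => DFunLike.congr_fun hτ p
  set j₀ : (LinearMap.ker q) →ₗ[A] P × N := (LinearMap.inr A P N).comp (LinearMap.ker q).subtype
    with hj₀
  have hj₀mem : ∀ z, j₀ z ∈ X := by
    rintro ⟨n, hn⟩
    rw [memX]
    simp only [hj₀, LinearMap.comp_apply, LinearMap.inr_apply, Submodule.coe_subtype]
    simpa using (LinearMap.mem_ker.1 hn).symm
  set j : (LinearMap.ker q) →ₗ[A] X := LinearMap.codRestrict X j₀ hj₀mem with hj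
  set r₀ : X →ₗ[A] N := (LinearMap.snd A P N).comp (X.subtype - X.subtype.comp (τ.comp π₁))
    with hr₀
  have hr₀mem : ∀ x : X, r₀ x ∈ LinearMap.ker q := by
    intro x
    have hx : g (x : P × N).1 = q (x : P × N).2 := (memX _).1 x.2
    have hsx : g (τ (π₁ x) : P × N).1 = q (τ (π₁ x) : P × N).2 := (memX _).1 (τ (π₁ x)).2
    have h1 : (τ (π₁ x) : P × N).1 = (x : P × N).1 := hτ' (π₁ x)
    simp only [LinearMap.mem_ker, hr₀, LinearMap.comp_apply, LinearMap.sub_apply,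
      LinearMap.snd_apply, Submodule.coe_subtype, Prod.snd_sub, map_sub]
    rw [← hx, ← hsx, h1, sub_self]
  set r : X →ₗ[A] (LinearMap.ker q) := LinearMap.codRestrict (LinearMap.ker q) r₀ hr₀mem with hr
  refine Module.Projective.of_split j r ?_
  refine LinearMap.ext fun n => ?_
  apply Subtype.ext
  show r₀ (j n) = (n : N)
  have hπ₁j : π₁ (j n) = 0 := by
    simp [hπ₁, hj, hj₀]
  simp only [hr₀, LinearMap.comp_apply, LinearMap.sub_apply, LinearMap.snd_apply,
    Submodule.coe_subtype, Prod.snd_sub]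
  rw [hπ₁j, map_zero]
  simp [hj, hj₀]

lemma kaplansky {A : Type u} [Ring A] (hA : ∀ I : Submodule A A, Module.Projective A I)
    {ι : Type u} [Nonempty ι] [LinearOrder ι] [WellFoundedLT ι] (K : Submodule A (ι →₀ A)) :
    Module.Projective A K := by
  classical
  set U : ι → Submodule A (ι →₀ A) := fun i => Finsupp.supported A A (Set.Iic i) with hU
  set φ : ι → ((ι →₀ A) →ₗ[A] A) := fun i => Finsupp.lapply i with hφ
  set ψ : ∀ i : ι, ↥(K ⊓ U i) →ₗ[A] A := fun i => (φ i).comp (K ⊓ U i).subtype with hψ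
  set I : ι → Submodule A A := fun i => LinearMap.range (ψ i) with hI
  have hsec : ∀ i, ∃ s : ↥(I i) →ₗ[A] ↥(K ⊓ U i),
      (ψ i).rangeRestrict.comp s = LinearMap.id := by
    intro i
    haveI := hA (I i)
    exact Module.projective_lifting_property _ LinearMap.id
      (LinearMap.surjective_rangeRestrict _)
  choose s hs using hsec
  have hsc : ∀ i (c : ↥(I i)), ψ i (s i c) = (c : A) := by
    intro i c
    have := DFunLike.congr_fun (hs i) c
    exact congrArg Subtype.val this
  set C : ι → Submodule A (ι →₀ A) :=
    fun i => LinearMap.range ((K ⊓ U i).subtype.comp (s i)) with hC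
  have hCK : ∀ i, C i ≤ K := by
    rintro i x ⟨c, rfl⟩
    exact ((s i c).2 : _ ∈ K ⊓ U i).1
  have hCU : ∀ i, C i ≤ U i := by
    rintro i x ⟨c, rfl⟩
    exact ((s i c).2 : _ ∈ K ⊓ U i).2
  have vanish : ∀ i j (x : ι →₀ A), x ∈ U j → j < i → φ i x = 0 := by
    intro i j x hx hji
    by_contra h
    have : i ∈ x.support := Finsupp.mem_support_iff.2 h
    have : i ∈ Set.Iic j := (Finsupp.mem_supported A x).1 hx this
    exact absurd hji (not_lt.2 this)
  -- spanning
  have main : ∀ i : ι, ∀ x : ι →₀ A, x ∈ K → x ∈ U i → x ∈ ⨆ j, C j := by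
    intro i
    refine WellFounded.induction (wellFounded_lt)
      (C := fun i => ∀ x : ι →₀ A, x ∈ K → x ∈ U i → x ∈ ⨆ j, C j) i ?_
    intro i IH x hxK hxU
    set xi : ↥(K ⊓ U i) := ⟨x, ⟨hxK, hxU⟩⟩ with hxi
    have hmem : ψ i xi ∈ I i := LinearMap.mem_range_self _ _
    set c : ↥(K ⊓ U i) := s i ⟨ψ i xi, hmem⟩ with hc
    have hcC : (c : ι →₀ A) ∈ C i := ⟨⟨ψ i xi, hmem⟩, rfl⟩
    set y : ι →₀ A := x - (c : ι →₀ A) with hy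
    have hyK : y ∈ K := sub_mem hxK (hCK i hcC)
    have hyU : y ∈ U i := sub_mem hxU (hCU i hcC)
    have hyi : φ i y = 0 := by
      have h1 : φ i (c : ι →₀ A) = ψ i xi := hsc i ⟨ψ i xi, hmem⟩
      have h2 : φ i x = ψ i xi := rfl
      rw [hy, map_sub, h1, h2, sub_self]
    rcases eq_or_ne y 0 with hy0 | hy0
    · have : x = (c : ι →₀ A) := by rwa [hy, sub_eq_zero] at hy0
      rw [this]
      exact le_iSup C i hcC
    · have hne : y.support.Nonempty := Finsupp.support_nonempty_iff.2 hy0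
      set j := y.support.max' hne with hj
      have hjs : j ∈ y.support := y.support.max'_mem hne
      have hji : j ≤ i := (Finsupp.mem_supported A y).1 hyU hjs
      have hjne : j ≠ i := by
        intro h
        have : y j ≠ 0 := Finsupp.mem_support_iff.1 hjs
        exact this (by rw [h]; exact hyi)
      have hjlt : j < i := lt_of_le_of_ne hji hjne
      have hyUj : y ∈ U j := by
        rw [hU]
        refine (Finsupp.mem_supported A y).2 ?_
        intro k hk
        exact y.support.le_max' k hk
      have hyS : y ∈ ⨆ j, C j := IH j hjlt y hyK hyUj
      have : x = y + (c : ι →₀ A) := by rw [hy]; abel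
      rw [this]
      exact add_mem hyS (le_iSup C i hcC)
  -- the sum map
  set T : (Π₀ i, ↥(C i)) →ₗ[A] (ι →₀ A) :=
    DFinsupp.lsum ℕ (M := fun i => ↥(C i)) (fun i => (C i).subtype) with hT
  have hrange : LinearMap.range T = ⨆ i, C i := (Submodule.iSup_eq_range_dfinsupp_lsum C).symm
  have hTapp : ∀ v : Π₀ i, ↥(C i), T v = ∑ k ∈ v.support, ((v k : ι →₀ A)) := by
    intro v
    rw [hT, DFinsupp.lsum_apply_apply, DFinsupp.sumAddHom_apply]
    rfl
  have hker0 : ∀ v : Π₀ i, ↥(C i), T v = 0 → v = 0 := by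
    intro v hv
    by_contra hv0'
    have hne : v.support.Nonempty := by
      rw [Finset.nonempty_iff_ne_empty]
      intro h
      exact hv0' (DFinsupp.support_eq_empty.1 h)
    set j := v.support.max' hne with hj
    have hjs : j ∈ v.support := v.support.max'_mem hne
    have hsum : φ j (T v) = ∑ k ∈ v.support, φ j ((v k : ι →₀ A)) := by
      rw [hTapp, map_sum]
    have hsingle : ∑ k ∈ v.support, φ j ((v k : ι →₀ A)) = φ j ((v j : ι →₀ A)) := by
      refine Finset.sum_eq_single j ?_ ?_
      · intro k hk hkj
        have hklt : k < j := lt_of_le_of_ne (v.support.le_max' k hk) hkj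
        exact vanish j k _ (hCU k (v k).2) hklt
      · intro h
        exact absurd hjs h
    have hzero : φ j ((v j : ι →₀ A)) = 0 := by
      rw [← hsingle, ← hsum, hv, map_zero]
    -- v j ∈ C j, so it comes from the section
    obtain ⟨c, hcv⟩ := (v j).2
    have : (c : A) = 0 := by
      rw [← hsc j c]
      show φ j ((s j c : ι →₀ A)) = 0
      rw [show ((s j c : ι →₀ A)) = ((v j : ι →₀ A)) from hcv, hzero]
    have hc0 : c = 0 := Subtype.ext this
    have : (v j : ι →₀ A) = 0 := by rw [← hcv, hc0, map_zero]
    exact (DFinsupp.mem_support_iff.1 hjs) (Subtype.ext this)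
  letI : AddCommGroup (Π₀ i, ↥(C i)) :=
    @DFinsupp.addCommGroup ι (fun i => ↥(C i)) (fun i => inferInstance)
  have hinj : Function.Injective T := by
    intro v w h
    have h0 : T (v - w) = 0 := by rw [LinearMap.map_sub, h, sub_self]
    have h1 := hker0 (v - w) h0
    rwa [sub_eq_zero] at h1
  -- each C i is projective
  have hCproj : ∀ i, Module.Projective A ↥(C i) := by
    intro i
    have hmi : Function.Injective ((K ⊓ U i).subtype.comp (s i)) := by
      intro c c' hcc
      have h1 : s i c = s i c' := Subtype.ext hcc
      have h2 : (ψ i).rangeRestrict (s i c) = c := DFunLike.congr_fun (hs i) c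
      have h3 : (ψ i).rangeRestrict (s i c') = c' := DFunLike.congr_fun (hs i) c'
      rw [← h2, ← h3, h1]
    haveI := hA (I i)
    exact Module.Projective.of_equiv (LinearEquiv.ofInjective _ hmi)
  have hrangeK : ∀ v : Π₀ i, ↥(C i), T v ∈ K := by
    intro v
    have : T v ∈ LinearMap.range T := LinearMap.mem_range_self _ _
    rw [hrange] at this
    exact (iSup_le hCK) this
  set T' : (Π₀ i, ↥(C i)) →ₗ[A] K := LinearMap.codRestrict K T hrangeK with hT'
  have hbij : Function.Bijective T' := by
    constructor
    · intro v w h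
      exact hinj (congrArg Subtype.val h)
    · rintro ⟨k, hk⟩
      have hkU : ∃ i, k ∈ U i := by
        rcases eq_or_ne k 0 with hk0 | hk0
        · obtain ⟨i⟩ := (inferInstance : Nonempty ι)
          exact ⟨i, by rw [hk0]; exact Submodule.zero_mem _⟩
        · have hne : k.support.Nonempty := Finsupp.support_nonempty_iff.2 hk0
          refine ⟨k.support.max' hne, (Finsupp.mem_supported A k).2 ?_⟩
          intro m hm
          exact k.support.le_max' m hm
      obtain ⟨i, hkUi⟩ := hkU
      have : k ∈ ⨆ j, C j := main i k hk hkUi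
      rw [← hrange] at this
      obtain ⟨v, hv⟩ := this
      exact ⟨v, Subtype.ext hv⟩
  haveI : Module.Projective A (Π₀ i, ↥(C i)) := by
    haveI := hCproj
    infer_instance
  exact Module.Projective.of_equiv (LinearEquiv.ofBijective T' hbij)


/-- The tautological linear equivalence between `Aᵐᵒᵖ` and `A` as right `A`-modules. -/
def unopLinearEquiv (A : Type u) [Ring A] : Aᵐᵒᵖ ≃ₗ[Aᵐᵒᵖ] A :=
  { toFun := MulOpposite.unop
    invFun := MulOpposite.op
    map_add' := fun a b => rfl
    map_smul' := fun a b => rfl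
    left_inv := fun a => rfl
    right_inv := fun a => rfl }

/-- `A` is projective as a module over `Aᵐᵒᵖ` (it is free of rank one). -/
lemma projective_op_self (A : Type u) [Ring A] : Module.Projective Aᵐᵒᵖ A :=
  Module.Projective.of_equiv (unopLinearEquiv A)

/-- Over a right hereditary ring every module has projective dimension at most one. -/
lemma pd1_of_hereditary {A : Type u} [Ring A] (hA : ∀ I : Submodule A A, Module.Projective A I)
    (M : Type u) [AddCommGroup M] [Module A M] : ProjDimLE1 A M := by
  classical
  letI : LinearOrder M := IsWellOrder.linearOrder WellOrderingRel
  letI : WellFoundedLT M := ⟨(WellOrderingRel.isWellOrder (α := M)).wf⟩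
  refine ⟨ModuleCat.of A (M →₀ A), Finsupp.linearCombination A (id : M → M), ?_, ?_, ?_⟩
  · exact (inferInstance : Module.Projective A (M →₀ A))
  · exact Finsupp.linearCombination_surjective A Function.surjective_id
  · exact kaplansky hA _

/-- Over a semihereditary ring, `R ⧸ I` is a direct limit of the modules `R ⧸ J`,
`J` finitely generated contained in `I`, all of which have projective dimension `≤ 1`. -/
lemma quotient_isDirectLimit {R : Type u} [Ring R]
    (hsh : ∀ I : Submodule Rᵐᵒᵖ R, I.FG → Module.Projective Rᵐᵒᵖ I) (I : Submodule Rᵐᵒᵖ R) :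
    IsDirectLimitOf Rᵐᵒᵖ (P1Class Rᵐᵒᵖ) (R ⧸ I) := by
  classical
  haveI hRproj : Module.Projective Rᵐᵒᵖ R := projective_op_self R
  refine ⟨{J : Submodule Rᵐᵒᵖ R // J.FG ∧ J ≤ I}, fun J J' => J.1 ≤ J'.1,
    fun a b c hab hbc => le_trans hab hbc,
    ⟨⟨⊥, Submodule.fg_bot, bot_le⟩⟩,
    fun J => le_refl J.1,
    fun J J' => ⟨⟨J.1 ⊔ J'.1, J.2.1.sup J'.2.1, sup_le J.2.2 J'.2.2⟩, le_sup_left, le_sup_right⟩,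
    fun J => ModuleCat.of Rᵐᵒᵖ (R ⧸ J.1),
    fun J J' h => Submodule.mapQ J.1 J'.1 LinearMap.id (by rwa [Submodule.comap_id]),
    fun J => Submodule.mapQ J.1 I LinearMap.id (by rw [Submodule.comap_id]; exact J.2.2),
    ?_, ?_, ?_, ?_, ?_, ?_⟩
  · -- each R ⧸ J has projective dimension at most 1
    intro J
    show ProjDimLE1 Rᵐᵒᵖ (R ⧸ J.1)
    refine ⟨ModuleCat.of Rᵐᵒᵖ R, J.1.mkQ, hRproj, Submodule.mkQ_surjective _, ?_⟩
    haveI h1 := hsh J.1 J.2.1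
    have h2 : LinearMap.ker J.1.mkQ = J.1 := Submodule.ker_mkQ _
    exact Module.Projective.of_equiv
      (LinearEquiv.ofEq J.1 (LinearMap.ker J.1.mkQ) h2.symm)
  · intro J h
    refine Submodule.linearMap_qext _ ?_
    exact LinearMap.ext fun r => rfl
  · intro J J' J'' h1 h2
    refine Submodule.linearMap_qext _ ?_
    exact LinearMap.ext fun r => rfl
  · intro J J' h
    refine Submodule.linearMap_qext _ ?_
    exact LinearMap.ext fun r => rfl
  · intro m
    obtain ⟨r, rfl⟩ := Submodule.mkQ_surjective I m
    exact ⟨⟨⊥, Submodule.fg_bot, bot_le⟩, Submodule.Quotient.mk r, rfl⟩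
  · intro J x hx
    obtain ⟨r, rfl⟩ := Submodule.mkQ_surjective J.1 x
    have hrI : r ∈ I := (Submodule.Quotient.mk_eq_zero I).1 hx
    refine ⟨⟨J.1 ⊔ Submodule.span Rᵐᵒᵖ {r}, J.2.1.sup (Submodule.fg_span_singleton r),
      sup_le J.2.2 ((Submodule.span_singleton_le_iff_mem r I).2 hrI)⟩, le_sup_left, ?_⟩
    have hrJ : r ∈ J.1 ⊔ Submodule.span Rᵐᵒᵖ {r} :=
      Submodule.mem_sup_right (Submodule.mem_span_singleton_self r)
    exact (Submodule.Quotient.mk_eq_zero _).2 hrJ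

/-- **Lemma 6.2.** -/
theorem semihereditary_P1_closed_iff_hereditary (R : Type u) [Ring R]
    (hsh : ∀ I : Submodule Rᵐᵒᵖ R, I.FG → Module.Projective Rᵐᵒᵖ I) :
    ((∀ M : ModuleCat.{u} Rᵐᵒᵖ,
        IsDirectLimitOf Rᵐᵒᵖ (P1Class Rᵐᵒᵖ) (M : Type u) → ProjDimLE1 Rᵐᵒᵖ (M : Type u)) ↔
      (∀ I : Submodule Rᵐᵒᵖ R, Module.Projective Rᵐᵒᵖ I)) ∧
    ((∀ I : Submodule Rᵐᵒᵖ R, Module.Projective Rᵐᵒᵖ I) ↔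
      (∀ M : ModuleCat.{u} Rᵐᵒᵖ, ProjDimLE1 Rᵐᵒᵖ (M : Type u))) := by
  haveI hRproj : Module.Projective Rᵐᵒᵖ R := projective_op_self R
  -- hereditary implies every module has projective dimension at most 1
  have key1 : (∀ I : Submodule Rᵐᵒᵖ R, Module.Projective Rᵐᵒᵖ I) →
      ∀ M : ModuleCat.{u} Rᵐᵒᵖ, ProjDimLE1 Rᵐᵒᵖ (M : Type u) := by
    intro h M
    have h' : ∀ I : Submodule Rᵐᵒᵖ Rᵐᵒᵖ, Module.Projective Rᵐᵒᵖ I := by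
      intro I
      haveI := h (I.map ((unopLinearEquiv R) : Rᵐᵒᵖ →ₗ[Rᵐᵒᵖ] R))
      exact Module.Projective.of_equiv ((unopLinearEquiv R).submoduleMap I).symm
    exact pd1_of_hereditary h' (M : Type u)
  -- if `R ⧸ I` has projective dimension at most 1 then `I` is projective
  have key0 : ∀ I : Submodule Rᵐᵒᵖ R, ProjDimLE1 Rᵐᵒᵖ (R ⧸ I) →
      Module.Projective Rᵐᵒᵖ I := by
    intro I hpd
    haveI h1 : Module.Projective Rᵐᵒᵖ (LinearMap.ker I.mkQ) :=
      ker_projective_of_pd1 I.mkQ (Submodule.mkQ_surjective I) hpd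
    have h2 : LinearMap.ker I.mkQ = I := Submodule.ker_mkQ _
    exact Module.Projective.of_equiv (LinearEquiv.ofEq _ _ h2)
  constructor
  · constructor
    · -- closure under direct limits implies hereditary
      intro hclosed I
      refine key0 I ?_
      exact hclosed (ModuleCat.of Rᵐᵒᵖ (R ⧸ I)) (quotient_isDirectLimit hsh I)
    · -- hereditary implies closure (trivially: every module has pd ≤ 1)
      intro hhered M _
      exact key1 hhered M
  · constructor
    · exact key1
    · intro hall I
      exact key0 I (hall (ModuleCat.of Rᵐᵒᵖ (R ⧸ I)))
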